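/- Let 𝒜 = {0,1} with p_0 = p_1 = 1/2, and let w = 0101⋯ be the alternating word of length m (w_j = j mod 2, say). Then for any 1 ≤ m ≤ n/2, σ_1² ≤ 10 (n/m) C(n−1, m−1)². -/

import Mathlib

noncomputable section

/-- `σ₁²` of the paper (eq. (2.16)): here the text positions `i ∈ {1,…,n}` and word
positions `j ∈ {1,…,m}` are 0-indexed as `i : Fin n`, `j : Fin m`, so that
`C(i-1, j-1)` becomes `C(i, j)` and `C(n-i, m-j)` becomes `C(n-1-i, m-1-j)`. -/
def sigma1Sq {A : Type*} [Fintype A] [DecidableEq A] (p : A → ℝ) (n m : ℕ)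
    (w : Fin m → A) : ℝ :=
  (∑ i : Fin n, ∑ a : A, (p a)⁻¹ *
      (∑ j ∈ Finset.univ.filter (fun j : Fin m => w j = a),
        (((i : ℕ).choose (j : ℕ) * (n - 1 - (i : ℕ)).choose (m - 1 - (j : ℕ)) : ℕ) : ℝ)) ^ 2)
    - n * ((n - 1).choose (m - 1) : ℝ) ^ 2

namespace SigmaAux

open Polynomial Finset

/-! ### Coefficient lemmas -/

lemma coeff_one_sub_X_pow {S : Type*} [CommRing S] (i j : ℕ) :
    ((1 - X : S[X]) ^ i).coeff j = (-1) ^ j * (i.choose j : S) := by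
  have h : (1 - X : S[X]) = -(X + C (-1)) := by simp; ring
  rw [h, neg_pow, show ((-1 : S[X])) = C (-1) by simp, ← map_pow, coeff_C_mul,
    coeff_X_add_C_pow]
  by_cases hij : j ≤ i
  · have : (-1 : S) ^ i = (-1) ^ j * (-1) ^ (i - j) := by
      rw [← pow_add]; congr 1; omega
    rw [this]
    ring_nf
    rw [mul_comm (i-j) 2, pow_mul, neg_one_sq, one_pow, mul_one]
  · rw [Nat.choose_eq_zero_of_lt (by omega)]
    simp

lemma coeff_mix {S : Type*} [CommRing S] (i k m' : ℕ) :
    (((1 - X) ^ i * (1 + X) ^ k : S[X])).coeff m'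
      = ∑ ab ∈ Finset.HasAntidiagonal.antidiagonal m', (-1) ^ ab.1 * (i.choose ab.1 : S) * (k.choose ab.2 : S) := by
  rw [coeff_mul]
  refine Finset.sum_congr rfl fun ab _ => ?_
  rw [coeff_one_sub_X_pow, coeff_one_add_X_pow, mul_assoc]

lemma coeff_q_pow (k b : ℕ) :
    ((1 + C (X : ℝ[X]) * X) ^ k).coeff b = (k.choose b : ℝ[X]) * X ^ b := by
  rw [add_comm, add_pow, finset_sum_coeff]
  have h : ∀ l ∈ range (k + 1),
      ((C (X : ℝ[X]) * X) ^ l * 1 ^ (k - l) * (k.choose l : ℝ[X][X])).coeff b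
        = if b = l then (k.choose l : ℝ[X]) * X ^ l else 0 := by
    intro l _
    rw [one_pow, mul_one, mul_pow, ← map_pow, ← map_natCast (C : ℝ[X] →+* ℝ[X][X]),
      mul_right_comm, ← map_mul, coeff_C_mul, coeff_X_pow]
    by_cases hb : b = l <;> simp [hb, mul_comm]
  rw [Finset.sum_congr rfl h, Finset.sum_ite_eq]
  by_cases hb : b ≤ k
  · simp [Finset.mem_range, Nat.lt_succ_iff, hb]
  · simp [Finset.mem_range, Nat.lt_succ_iff, hb, Nat.choose_eq_zero_of_lt (by omega : k < b)]

lemma phi_qs (k t m' : ℕ) :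
    (((1 + C (X : ℝ[X]) * X) ^ k * (C (X : ℝ[X]) + X) ^ (2 * t)).coeff m').coeff m'
      = if t ≤ m' then ((2 * t).choose t : ℝ) * (k.choose (m' - t) : ℝ) else 0 := by
  rw [coeff_mul, finset_sum_coeff]
  have h : ∀ ab ∈ Finset.HasAntidiagonal.antidiagonal m',
      (((1 + C (X : ℝ[X]) * X) ^ k).coeff ab.1 * ((C (X : ℝ[X]) + X) ^ (2 * t)).coeff ab.2).coeff m'
        = if m' = ab.1 + (2 * t - ab.2) then ((k.choose ab.1 : ℝ) * ((2*t).choose ab.2 : ℝ)) else 0 := by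
    intro ab _
    rw [coeff_q_pow, add_comm (C (X : ℝ[X])) X, coeff_X_add_C_pow]
    have : (k.choose ab.1 : ℝ[X]) * X ^ ab.1 * ((X : ℝ[X]) ^ (2 * t - ab.2) * ((2*t).choose ab.2 : ℝ[X]))
        = C ((k.choose ab.1 : ℝ) * ((2*t).choose ab.2 : ℝ)) * X ^ (ab.1 + (2 * t - ab.2)) := by
      rw [map_mul]
      simp only [map_natCast]
      ring
    rw [this, coeff_C_mul, coeff_X_pow]
    by_cases hc : m' = ab.1 + (2 * t - ab.2) <;> simp [hc]
  rw [Finset.sum_congr rfl h]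
  by_cases ht : t ≤ m'
  · rw [if_pos ht, Finset.sum_eq_single (m' - t, t)]
    · rw [if_pos (by omega), mul_comm]
    · intro ab hab hne
      rw [Finset.HasAntidiagonal.mem_antidiagonal] at hab
      by_cases h2 : ab.2 ≤ 2 * t
      · have : ¬ (m' = ab.1 + (2 * t - ab.2)) := by
          intro hc
          apply hne
          have h1 : ab.2 = t := by omega
          have h2' : ab.1 = m' - t := by omega
          exact Prod.ext h2' h1
        simp [this]
      · rw [Nat.choose_eq_zero_of_lt (by omega : 2*t < ab.2)]
        simp
    · intro h
      exact absurd (Finset.HasAntidiagonal.mem_antidiagonal.mpr (by omega)) h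
  · rw [if_neg ht]
    apply Finset.sum_eq_zero
    intro ab hab
    rw [Finset.HasAntidiagonal.mem_antidiagonal] at hab
    have : ¬ (m' = ab.1 + (2 * t - ab.2)) := by omega
    simp [this]

/-- The signed coefficient `D(i) = ∑_j (-1)^j C(i,j) C(n-1-i, m-1-j)`. -/
def Dr (n m i : ℕ) : ℝ :=
  ∑ ab ∈ Finset.HasAntidiagonal.antidiagonal (m - 1),
    (-1) ^ ab.1 * (i.choose ab.1 : ℝ) * ((n - 1 - i).choose ab.2 : ℝ)

/-- Key identity: `∑_{i<n} D(i)² = ∑_{t<m} C(n,2t+1) C(2t,t) C(n-1-2t, m-1-t)`. -/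
lemma key_identity (n m : ℕ) (hm : 1 ≤ m) (hn : 2 * m ≤ n) :
    ∑ i ∈ range n, (Dr n m i) ^ 2
      = ∑ t ∈ range m,
          (n.choose (2*t+1) : ℝ) * ((2*t).choose t : ℝ) * ((n-1-2*t).choose (m-1-t) : ℝ) := by
  classical
  set xx : ℝ[X][X] := C X with hxx
  set u : ℝ[X][X] := (1 + xx) * (1 + X) with hu
  set v : ℝ[X][X] := (1 - xx) * (1 - X) with hv
  set s : ℝ[X][X] := xx + X with hs
  set q : ℝ[X][X] := 1 + xx * X with hq
  have hs0 : s ≠ 0 := by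
    intro h0
    have := congrArg (fun p : ℝ[X][X] => (p.coeff 0).coeff 1) h0
    simp [hs, hxx, coeff_add] at this
  have h2s : (2 : ℝ[X][X]) * s ≠ 0 := mul_ne_zero two_ne_zero hs0
  have hgeom : (∑ i ∈ range n, v ^ i * u ^ (n - 1 - i)) * ((2:ℝ[X][X]) * s) = u ^ n - v ^ n := by
    have h := geom_sum₂_mul v u n
    have huv : u - v = 2 * s := by rw [hu, hv, hs]; ring
    calc (∑ i ∈ range n, v ^ i * u ^ (n - 1 - i)) * ((2:ℝ[X][X]) * s)
        = (∑ i ∈ range n, v ^ i * u ^ (n - 1 - i)) * (u - v) := by rw [huv]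
      _ = -((∑ i ∈ range n, v ^ i * u ^ (n - 1 - i)) * (v - u)) := by ring
      _ = u ^ n - v ^ n := by rw [h]; ring
  have hW : u ^ n - v ^ n
      = ((2:ℝ[X][X]) * s) * ∑ t ∈ range ((n+1)/2),
          (n.choose (n-1-2*t) : ℝ[X][X]) * q ^ (n-1-2*t) * s ^ (2*t) := by
    have hu' : u = q + s := by rw [hu, hq, hs]; ring
    have hv' : v = q - s := by rw [hv, hq, hs]; ring
    rw [hu', hv', show q - s = q + (-s) by ring, add_pow, add_pow, ← Finset.sum_sub_distrib]
    have step : ∀ k ∈ range (n+1),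
        q ^ k * s ^ (n-k) * (n.choose k : ℝ[X][X]) - q ^ k * (-s) ^ (n-k) * (n.choose k : ℝ[X][X])
          = if Odd (n - k) then 2 * (q ^ k * s ^ (n-k) * (n.choose k : ℝ[X][X])) else 0 := by
      intro k _
      by_cases hodd : Odd (n - k)
      · rw [if_pos hodd, hodd.neg_pow s]; ring
      · rw [if_neg hodd, (Nat.not_odd_iff_even.mp hodd).neg_pow s]; ring
    rw [Finset.sum_congr rfl step, Finset.sum_ite, Finset.sum_const_zero, add_zero,
      Finset.mul_sum]
    refine Finset.sum_nbij' (fun k => (n - 1 - k) / 2) (fun t => n - 1 - 2 * t) ?_ ?_ ?_ ?_ ?_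
    · intro k hk
      simp only [Finset.mem_filter, Finset.mem_range, Nat.odd_iff] at hk ⊢
      omega
    · intro t ht
      simp only [Finset.mem_filter, Finset.mem_range, Nat.odd_iff] at ht ⊢
      omega
    · intro k hk
      simp only [Finset.mem_filter, Finset.mem_range, Nat.odd_iff] at hk
      show n - 1 - 2 * ((n - 1 - k) / 2) = k
      omega
    · intro t ht
      simp only [Finset.mem_range] at ht
      show (n - 1 - (n - 1 - 2 * t)) / 2 = t
      omega
    · intro k hk
      simp only [Finset.mem_filter, Finset.mem_range, Nat.odd_iff] at hk
      have h1 : n - 1 - 2 * ((n - 1 - k) / 2) = k := by omega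
      have h2 : n - k = 2 * ((n - 1 - k) / 2) + 1 := by omega
      rw [h1, h2, pow_succ]
      ring
  have hmain : (∑ i ∈ range n, v ^ i * u ^ (n - 1 - i))
      = ∑ t ∈ range ((n+1)/2),
          (n.choose (n-1-2*t) : ℝ[X][X]) * q ^ (n-1-2*t) * s ^ (2*t) := by
    have h := hgeom.trans hW
    rw [mul_comm ((2:ℝ[X][X]) * s)] at h
    exact mul_right_cancel₀ h2s h
  have hφ := congrArg (fun p : ℝ[X][X] => (p.coeff (m-1)).coeff (m-1)) hmain
  simp only [finset_sum_coeff] at hφ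
  have hL : ∀ i ∈ range n,
      ((v ^ i * u ^ (n - 1 - i)).coeff (m-1)).coeff (m-1) = Dr n m i ^ 2 := by
    intro i _
    have hfact : v ^ i * u ^ (n - 1 - i)
        = C ((1 - X) ^ i * (1 + X) ^ (n-1-i) : ℝ[X])
          * ((1 - X) ^ i * (1 + X) ^ (n-1-i) : ℝ[X][X]) := by
      have hv2 : v = C (1 - X : ℝ[X]) * (1 - X) := by
        rw [hv, hxx]; simp only [map_sub, map_one]
      have hu2 : u = C (1 + X : ℝ[X]) * (1 + X) := by
        rw [hu, hxx]; simp only [map_add, map_one]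
      rw [hv2, hu2, mul_pow, mul_pow, map_mul, map_pow, map_pow]
      ring
    rw [hfact, coeff_C_mul]
    have hinner : (((1 - X) ^ i * (1 + X) ^ (n-1-i) : ℝ[X][X])).coeff (m-1)
        = C (Dr n m i) := by
      rw [coeff_mix, Dr, map_sum]
      refine Finset.sum_congr rfl fun ab _ => ?_
      simp [map_mul, map_pow, map_natCast]
    rw [hinner, coeff_mul_C, coeff_mix]
    rw [Dr]
    ring
  rw [Finset.sum_congr rfl hL] at hφ
  have hR : ∀ t ∈ range ((n+1)/2),
      (((n.choose (n-1-2*t) : ℝ[X][X]) * q ^ (n-1-2*t) * s ^ (2*t)).coeff (m-1)).coeff (m-1)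
        = (n.choose (n-1-2*t) : ℝ) *
            (if t ≤ m - 1 then ((2*t).choose t : ℝ) * ((n-1-2*t).choose (m-1-t) : ℝ) else 0) := by
    intro t _
    rw [mul_assoc, ← map_natCast (C : ℝ[X] →+* ℝ[X][X]), coeff_C_mul,
      ← map_natCast (C : ℝ →+* ℝ[X]), coeff_C_mul, hq, hs, hxx, phi_qs]
  rw [Finset.sum_congr rfl hR] at hφ
  rw [hφ]
  rw [← Finset.sum_subset (Finset.range_subset_range.mpr (by omega : m ≤ (n+1)/2))]
  · refine Finset.sum_congr rfl fun t ht => ?_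
    simp only [Finset.mem_range] at ht
    rw [if_pos (by omega), show n - 1 - 2*t = n - (2*t+1) by omega,
      Nat.choose_symm (by omega : 2*t+1 ≤ n)]
    rw [show n - (2*t+1) = n - 1 - 2*t by omega]
    ring
  · intro t ht hnt
    simp only [Finset.mem_range] at ht hnt
    rw [if_neg (by omega)]
    ring

/-! ### Combinatorial bounds -/

lemma nat_sum_le (n m : ℕ) (hm : 1 ≤ m) (hn : 2 * m ≤ n) :
    ∑ t ∈ range m, n.choose (2*t+1) * (2*t).choose t * (n-1-2*t).choose (m-1-t)
      ≤ n.choose m * n.choose (m-1) := by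
  have hterm : ∀ t ∈ range m,
      n.choose (2*t+1) * (2*t).choose t * (n-1-2*t).choose (m-1-t)
        ≤ n.choose m * ((n-m).choose t * m.choose (t+1)) := by
    intro t ht
    simp only [Finset.mem_range] at ht
    have h1 : n.choose (2*t+1) * (2*t).choose t * (n-1-2*t).choose (m-1-t)
        ≤ n.choose (2*t+1) * (2*t+1).choose t * (n-1-2*t).choose (m-1-t) := by
      have := Nat.choose_le_choose t (Nat.le_succ (2*t))
      exact Nat.mul_le_mul_right _ (Nat.mul_le_mul_left _ this)
    refine h1.trans (le_of_eq ?_)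
    have h2 : n.choose (2*t+1) * (2*t+1).choose t = n.choose t * (n-t).choose (t+1) := by
      have := Nat.choose_mul (n := n) (show t ≤ 2*t+1 by omega)
      rw [this, show 2*t+1-t = t+1 by omega]
    have h3 : (n-t).choose (t+1) * (n-1-2*t).choose (m-1-t) = (n-t).choose m * m.choose (t+1) := by
      have := Nat.choose_mul (n := n-t) (show t+1 ≤ m by omega)
      rw [this, show n-t-(t+1) = n-1-2*t by omega, show m-(t+1) = m-1-t by omega]
    have h4 : n.choose t * (n-t).choose m = n.choose m * (n-m).choose t := by
      have ha := Nat.choose_mul (n := n) (show t ≤ m+t by omega)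
      have hb := Nat.choose_mul (n := n) (show m ≤ m+t by omega)
      rw [show m+t-t = m by omega] at ha
      rw [show m+t-m = t by omega] at hb
      have hsym : (m+t).choose t = (m+t).choose m := by
        have := Nat.choose_symm (show m ≤ m+t by omega)
        rw [show m+t-m = t by omega] at this
        exact this
      rw [← ha, ← hb, hsym]
    calc n.choose (2*t+1) * (2*t+1).choose t * (n-1-2*t).choose (m-1-t)
        = n.choose t * ((n-t).choose (t+1) * (n-1-2*t).choose (m-1-t)) := by rw [h2]; ring
      _ = n.choose t * ((n-t).choose m * m.choose (t+1)) := by rw [h3]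
      _ = n.choose t * (n-t).choose m * m.choose (t+1) := by ring
      _ = n.choose m * ((n-m).choose t * m.choose (t+1)) := by rw [h4]; ring
  refine (Finset.sum_le_sum hterm).trans (le_of_eq ?_)
  rw [← Finset.mul_sum]
  congr 1
  have hV : ∑ t ∈ range m, (n-m).choose t * m.choose (t+1)
      = ∑ t ∈ range m, (n-m).choose t * m.choose (m-1-t) := by
    refine Finset.sum_congr rfl fun t ht => ?_
    simp only [Finset.mem_range] at ht
    congr 1
    have := Nat.choose_symm (show t+1 ≤ m by omega)
    rw [show m-(t+1) = m-1-t by omega] at this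
    exact this.symm
  rw [hV]
  have h := Nat.add_choose_eq (n-m) m (m-1)
  rw [show n-m+m = n by omega] at h
  rw [h, Finset.Nat.sum_antidiagonal_eq_sum_range_succ_mk]
  rw [show (m-1).succ = m by omega]

lemma choose_le_two_mul (n m : ℕ) (hm : 1 ≤ m) (hn : 2 * m ≤ n) :
    n.choose (m-1) ≤ 2 * (n-1).choose (m-1) := by
  rcases Nat.eq_or_lt_of_le hm with h1 | h2
  · simp [← h1]
  · have hm2 : 2 ≤ m := h2
    have hrw : n.choose (m-1) = (n-1).choose (m-2) + (n-1).choose (m-1) := by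
      have := Nat.choose_succ_succ' (n-1) (m-2)
      rw [show n-1+1 = n by omega, show m-2+1 = m-1 by omega] at this
      exact this
    have hle : (n-1).choose (m-2) ≤ (n-1).choose (m-1) := by
      have := Nat.choose_le_succ_of_lt_half_left (show m-2 < (n-1)/2 by omega)
      rw [show m-2+1 = m-1 by omega] at this
      exact this
    omega

/-! ### Reduction of `sigma1Sq` -/

lemma Dr_eq (n m i : ℕ) (hm : 1 ≤ m) :
    Dr n m i = ∑ j ∈ range m, (-1 : ℝ) ^ j * (i.choose j : ℝ) * ((n-1-i).choose (m-1-j) : ℝ) := by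
  rw [Dr, Finset.Nat.sum_antidiagonal_eq_sum_range_succ_mk]
  rw [show (m-1).succ = m by omega]

lemma vandermonde_row (n m i : ℕ) (hm : 1 ≤ m) (hi : i ≤ n - 1) :
    ∑ j ∈ range m, ((i.choose j * (n-1-i).choose (m-1-j) : ℕ) : ℝ)
      = ((n-1).choose (m-1) : ℝ) := by
  have h : ∑ j ∈ range m, i.choose j * (n-1-i).choose (m-1-j) = (n-1).choose (m-1) := by
    have h0 := Nat.add_choose_eq i (n-1-i) (m-1)
    rw [show i + (n-1-i) = n-1 by omega] at h0
    rw [h0, Finset.Nat.sum_antidiagonal_eq_sum_range_succ_mk]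
    rw [show (m-1).succ = m by omega]
  exact_mod_cast congrArg (Nat.cast : ℕ → ℝ) h

lemma sigma_reduce (n m : ℕ) (hm : 1 ≤ m) (hn : 1 ≤ n) :
    sigma1Sq (fun _ : Fin 2 => (1 / 2 : ℝ)) n m (fun j => (⟨(j : ℕ) % 2, by omega⟩ : Fin 2))
      = ∑ i ∈ range n, Dr n m i ^ 2 := by
  rw [sigma1Sq]
  have hInner : ∀ i : Fin n,
      (∑ a : Fin 2, ((fun _ : Fin 2 => (1 / 2 : ℝ)) a)⁻¹ *
        (∑ j ∈ Finset.univ.filter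
            (fun j : Fin m => (⟨(j : ℕ) % 2, by omega⟩ : Fin 2) = a),
          (((i : ℕ).choose (j : ℕ) * (n - 1 - (i : ℕ)).choose (m - 1 - (j : ℕ)) : ℕ) : ℝ)) ^ 2)
      = ((n-1).choose (m-1) : ℝ) ^ 2 + Dr n m (i : ℕ) ^ 2 := by
    intro i
    rw [Fin.sum_univ_two]
    have hA : (∑ j ∈ Finset.univ.filter
          (fun j : Fin m => (⟨(j : ℕ) % 2, by omega⟩ : Fin 2) = 0),
        (((i : ℕ).choose (j : ℕ) * (n - 1 - (i : ℕ)).choose (m - 1 - (j : ℕ)) : ℕ) : ℝ))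
        = ∑ j : Fin m, (if (j : ℕ) % 2 = 0 then
            (((i : ℕ).choose (j : ℕ) * (n - 1 - (i : ℕ)).choose (m - 1 - (j : ℕ)) : ℕ) : ℝ) else 0) := by
      rw [Finset.sum_filter]
      refine Finset.sum_congr rfl fun j _ => ?_
      refine if_congr ?_ rfl rfl
      simp [Fin.ext_iff]
    have hB : (∑ j ∈ Finset.univ.filter
          (fun j : Fin m => (⟨(j : ℕ) % 2, by omega⟩ : Fin 2) = 1),
        (((i : ℕ).choose (j : ℕ) * (n - 1 - (i : ℕ)).choose (m - 1 - (j : ℕ)) : ℕ) : ℝ))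
        = ∑ j : Fin m, (if (j : ℕ) % 2 = 1 then
            (((i : ℕ).choose (j : ℕ) * (n - 1 - (i : ℕ)).choose (m - 1 - (j : ℕ)) : ℕ) : ℝ) else 0) := by
      rw [Finset.sum_filter]
      refine Finset.sum_congr rfl fun j _ => ?_
      refine if_congr ?_ rfl rfl
      simp [Fin.ext_iff]
    rw [hA, hB]
    set SA : ℝ := ∑ j : Fin m, (if (j : ℕ) % 2 = 0 then
        (((i : ℕ).choose (j : ℕ) * (n - 1 - (i : ℕ)).choose (m - 1 - (j : ℕ)) : ℕ) : ℝ) else 0)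
      with hSA
    set SB : ℝ := ∑ j : Fin m, (if (j : ℕ) % 2 = 1 then
        (((i : ℕ).choose (j : ℕ) * (n - 1 - (i : ℕ)).choose (m - 1 - (j : ℕ)) : ℕ) : ℝ) else 0)
      with hSB
    have hsum : SA + SB = ((n-1).choose (m-1) : ℝ) := by
      rw [hSA, hSB, ← Finset.sum_add_distrib]
      have hterm : ∀ j : Fin m, ((if (j : ℕ) % 2 = 0 then
            (((i : ℕ).choose (j : ℕ) * (n - 1 - (i : ℕ)).choose (m - 1 - (j : ℕ)) : ℕ) : ℝ) else 0)
          + (if (j : ℕ) % 2 = 1 then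
            (((i : ℕ).choose (j : ℕ) * (n - 1 - (i : ℕ)).choose (m - 1 - (j : ℕ)) : ℕ) : ℝ) else 0))
          = (((i : ℕ).choose (j : ℕ) * (n - 1 - (i : ℕ)).choose (m - 1 - (j : ℕ)) : ℕ) : ℝ) := by
        intro j
        by_cases hj : (j : ℕ) % 2 = 0
        · rw [if_pos hj, if_neg (by omega), add_zero]
        · rw [if_neg hj, if_pos (by omega), zero_add]
      rw [Finset.sum_congr rfl (fun j _ => hterm j)]
      rw [Fin.sum_univ_eq_sum_range
        (fun j => (((i : ℕ).choose j * (n - 1 - (i : ℕ)).choose (m - 1 - j) : ℕ) : ℝ)) m]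
      exact vandermonde_row n m (i : ℕ) hm (by omega)
    have hdiff : SA - SB = Dr n m (i : ℕ) := by
      rw [hSA, hSB, ← Finset.sum_sub_distrib]
      have hterm : ∀ j : Fin m, ((if (j : ℕ) % 2 = 0 then
            (((i : ℕ).choose (j : ℕ) * (n - 1 - (i : ℕ)).choose (m - 1 - (j : ℕ)) : ℕ) : ℝ) else 0)
          - (if (j : ℕ) % 2 = 1 then
            (((i : ℕ).choose (j : ℕ) * (n - 1 - (i : ℕ)).choose (m - 1 - (j : ℕ)) : ℕ) : ℝ) else 0))
          = (-1 : ℝ) ^ (j : ℕ) * ((i : ℕ).choose (j : ℕ) : ℝ)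
              * ((n - 1 - (i : ℕ)).choose (m - 1 - (j : ℕ)) : ℝ) := by
        intro j
        by_cases hj : (j : ℕ) % 2 = 0
        · rw [if_pos hj, if_neg (by omega), sub_zero,
            (Nat.even_iff.mpr hj).neg_one_pow]
          push_cast
          ring
        · rw [if_neg hj, if_pos (by omega), zero_sub,
            (Nat.odd_iff.mpr (by omega)).neg_one_pow]
          push_cast
          ring
      rw [Finset.sum_congr rfl (fun j _ => hterm j)]
      rw [Fin.sum_univ_eq_sum_range
        (fun j => (-1 : ℝ) ^ j * ((i : ℕ).choose j : ℝ)
          * ((n - 1 - (i : ℕ)).choose (m - 1 - j) : ℝ)) m]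
      exact (Dr_eq n m (i : ℕ) hm).symm
    have h12 : ((1 : ℝ)/2)⁻¹ = 2 := by norm_num
    rw [h12, ← hsum, ← hdiff]
    ring
  rw [Finset.sum_congr rfl (fun i _ => hInner i)]
  rw [Finset.sum_add_distrib, Finset.sum_const, Finset.card_univ, Fintype.card_fin]
  rw [Fin.sum_univ_eq_sum_range (fun i => Dr n m i ^ 2) n]
  ring

end SigmaAux

/-- Theorem 4.1: for the unbiased binary alphabet
(`𝒜 = {0,1}`, `p₀ = p₁ = 1/2`) and the alternating word `w = 0101⋯` of length `m`
(`w_j = j mod 2` in 0-indexed form), if `1 ≤ m ≤ n/2` then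
`σ₁² ≤ 10 (n/m) C(n-1,m-1)²`. -/
theorem sigma1Sq_alternating_upper_bound (n m : ℕ) (hm : 1 ≤ m) (hmn : (m : ℝ) ≤ n / 2) :
    sigma1Sq (fun _ : Fin 2 => (1 / 2 : ℝ)) n m (fun j => (⟨(j : ℕ) % 2, by omega⟩ : Fin 2))
      ≤ 10 * ((n : ℝ) / m) * ((n - 1).choose (m - 1) : ℝ) ^ 2 := by
  have hn2 : 2 * m ≤ n := by
    have h2 : ((2 * m : ℕ) : ℝ) ≤ (n : ℝ) := by push_cast; linarith
    exact_mod_cast h2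
  have hn1 : 1 ≤ n := by omega
  rw [SigmaAux.sigma_reduce n m hm hn1, SigmaAux.key_identity n m hm hn2]
  have hmpos : (0 : ℝ) < m := by exact_mod_cast hm
  set c : ℝ := ((n - 1).choose (m - 1) : ℝ) with hc
  have hc0 : 0 ≤ c := by rw [hc]; positivity
  have hcm0 : (0 : ℝ) ≤ (n.choose m : ℝ) := by positivity
  have hid : (m : ℝ) * (n.choose m : ℝ) = (n : ℝ) * c := by
    have h := Nat.add_one_mul_choose_eq (n-1) (m-1)
    rw [show n-1+1 = n by omega, show m-1+1 = m by omega] at h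
    rw [hc]
    exact_mod_cast (by rw [h]; ring : m * n.choose m = n * (n-1).choose (m-1))
  have hRHS : 10 * ((n : ℝ) / m) * c ^ 2 = 10 * (n.choose m : ℝ) * c := by
    have h : (n : ℝ) / m * c = (n.choose m : ℝ) := by
      rw [div_mul_eq_mul_div, ← hid, mul_comm (m : ℝ), mul_div_assoc,
        div_self (ne_of_gt hmpos), mul_one]
    calc 10 * ((n : ℝ) / m) * c ^ 2 = 10 * ((n : ℝ) / m * c) * c := by ring
      _ = 10 * (n.choose m : ℝ) * c := by rw [h]
  rw [hRHS]
  have hcast : (∑ t ∈ Finset.range m,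
      (n.choose (2*t+1) : ℝ) * ((2*t).choose t : ℝ) * ((n-1-2*t).choose (m-1-t) : ℝ))
      = ((∑ t ∈ Finset.range m,
          n.choose (2*t+1) * (2*t).choose t * (n-1-2*t).choose (m-1-t) : ℕ) : ℝ) := by
    push_cast
    rfl
  rw [hcast]
  calc ((∑ t ∈ Finset.range m,
          n.choose (2*t+1) * (2*t).choose t * (n-1-2*t).choose (m-1-t) : ℕ) : ℝ)
      ≤ ((n.choose m * n.choose (m-1) : ℕ) : ℝ) :=
        Nat.cast_le.mpr (SigmaAux.nat_sum_le n m hm hn2)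
    _ = (n.choose m : ℝ) * (n.choose (m-1) : ℝ) := by push_cast; ring
    _ ≤ (n.choose m : ℝ) * (2 * c) := by
        refine mul_le_mul_of_nonneg_left ?_ hcm0
        rw [hc]
        exact_mod_cast SigmaAux.choose_le_two_mul n m hm hn2
    _ ≤ 10 * (n.choose m : ℝ) * c := by nlinarith
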